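/- Any closed polygonal curve in the plane that has the reachable subgraph G_r in its interior and the unreachable subgraph G_u in its exterior crosses each boundary edge (an edge with exactly one reachable endpoint) an odd number of times, and crosses each accessible edge (an edge with both endpoints reachable but which is itself not part of G_r) an even number of times, provided the curve avoids all vertices and crossings are transversal. -/

import Mathlib

open Set

noncomputable section

abbrev Pt : Type := EuclideanSpace ℝ (Fin 2)

def pathSet (l : List Pt) : Set Pt :=
  ⋃ pq ∈ l.zip l.tail, segment ℝ pq.1 pq.2

def IsClosedPoly (l : List Pt) : Prop := 2 ≤ l.length ∧ l.head? = l.getLast?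

/-- The interior region of a closed curve `C`: points off the curve whose complementary
component is bounded. -/
def curveInterior (C : Set Pt) : Set Pt :=
  {p : Pt | p ∉ C ∧ Bornology.IsBounded (connectedComponentIn Cᶜ p)}

/-- The exterior region of a closed curve `C`. -/
def curveExterior (C : Set Pt) : Set Pt :=
  {p : Pt | p ∉ C ∧ ¬ Bornology.IsBounded (connectedComponentIn Cᶜ p)}

/-- Classification of a point relative to a curve `C`. -/
def Inside (C : Set Pt) (p : Pt) : Prop :=
  Bornology.IsBounded (connectedComponentIn Cᶜ p)

lemma inside_const {C : Set Pt} {f : ℝ → Pt} (hf : Continuous f) {a b : ℝ} (hab : a ≤ b)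
    (hoff : ∀ t ∈ Icc a b, f t ∉ C) : (Inside C (f a) ↔ Inside C (f b)) := by
  have hsub : f '' Icc a b ⊆ Cᶜ := by rintro _ ⟨t, ht, rfl⟩; exact hoff t ht
  have hconn : IsPreconnected (f '' Icc a b) :=
    (isPreconnected_Icc).image f hf.continuousOn
  have h1 : f '' Icc a b ⊆ connectedComponentIn Cᶜ (f a) :=
    hconn.subset_connectedComponentIn (mem_image_of_mem f (left_mem_Icc.2 hab)) hsub
  have heq : connectedComponentIn Cᶜ (f a) = connectedComponentIn Cᶜ (f b) :=
    connectedComponentIn_eq (h1 (mem_image_of_mem f (right_mem_Icc.2 hab)))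
  unfold Inside
  rw [heq]

lemma key {C : Set Pt} {f : ℝ → Pt} (hf : Continuous f)
    (htr : ∀ t ∈ Ioo (0:ℝ) 1, f t ∈ C → ∀ δ > (0:ℝ),
      (∃ s ∈ Ioo (0:ℝ) 1, |s - t| < δ ∧ f s ∉ C ∧ Inside C (f s)) ∧
      (∃ s ∈ Ioo (0:ℝ) 1, |s - t| < δ ∧ f s ∉ C ∧ ¬ Inside C (f s))) :
    ∀ n : ℕ, ∀ a b : ℝ, 0 ≤ a → a ≤ b → b ≤ 1 → f a ∉ C → f b ∉ C →
      {t ∈ Ioo a b | f t ∈ C}.Finite → {t ∈ Ioo a b | f t ∈ C}.ncard = n →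
      (Even n ↔ (Inside C (f a) ↔ Inside C (f b))) := by
  intro n
  induction n with
  | zero =>
    intro a b ha0 hab hb1 hfa hfb hfin hcard
    have hemp : {t ∈ Ioo a b | f t ∈ C} = ∅ := (Set.ncard_eq_zero hfin).1 hcard
    have hoff : ∀ t ∈ Icc a b, f t ∉ C := by
      intro t ⟨hat, htb⟩ htC
      rcases eq_or_lt_of_le hat with rfl | hat'
      · exact hfa htC
      rcases eq_or_lt_of_le htb with rfl | htb'
      · exact hfb htC
      have ht : t ∈ ({t ∈ Ioo a b | f t ∈ C} : Set ℝ) := ⟨⟨hat', htb'⟩, htC⟩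
      rw [hemp] at ht
      exact absurd ht (Set.notMem_empty t)
    simpa using inside_const hf hab hoff
  | succ n ih =>
    intro a b ha0 hab hb1 hfa hfb hfin hcard
    classical
    set T := {t ∈ Ioo a b | f t ∈ C} with hTdef
    have hne : T.Nonempty := Set.nonempty_of_ncard_ne_zero (by rw [hcard]; omega)
    set m := sInf T with hmdef
    have hmT : m ∈ T := hne.csInf_mem hfin
    have hmmin : ∀ t ∈ T, m ≤ t := fun t ht => csInf_le hfin.bddBelow ht
    obtain ⟨hmab, hmC⟩ := hmT
    set b' : ℝ := if h : (T \ {m}).Nonempty then sInf (T \ {m}) else b with hb'def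
    have hb'mem : ∀ t ∈ T, t ≠ m → b' ≤ t := by
      intro t ht htm
      rw [hb'def, dif_pos ⟨t, ht, htm⟩]
      exact csInf_le ((show (T \ {m}).Finite from hfin.diff)).bddBelow ⟨ht, htm⟩
    have hb'lt : m < b' := by
      rw [hb'def]; split_ifs with h
      · obtain ⟨htT, htm⟩ := h.csInf_mem ((show (T \ {m}).Finite from hfin.diff))
        exact lt_of_le_of_ne (hmmin _ htT) (Ne.symm (by simpa using htm))
      · exact hmab.2
    have hb'le : b' ≤ b := by
      rw [hb'def]; split_ifs with h
      · exact le_of_lt (h.csInf_mem ((show (T \ {m}).Finite from hfin.diff))).1.1.2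
      · exact le_rfl
    set δ := min (m - a) (b' - m) with hδdef
    have hδpos : 0 < δ := lt_min (sub_pos.2 hmab.1) (sub_pos.2 hb'lt)
    have hm01 : m ∈ Ioo (0:ℝ) 1 := ⟨lt_of_le_of_lt ha0 hmab.1, lt_of_lt_of_le hmab.2 hb1⟩
    have hbelow : ∀ s, |s - m| < δ → f s ∉ C → s < m → (Inside C (f s) ↔ Inside C (f a)) := by
      intro s hsδ hsC hsm
      have h1 := (abs_lt.1 hsδ).1
      have h2 := min_le_left (m - a) (b' - m)
      have has : a < s := by simp only [hδdef] at h1; linarith [h1.trans_le' (neg_le_neg h2)]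
      have hoff : ∀ t ∈ Icc a s, f t ∉ C := by
        intro t ⟨hat, hts⟩ htC
        rcases eq_or_lt_of_le hat with rfl | hat'
        · exact hfa htC
        have htT : t ∈ T := ⟨⟨hat', lt_of_le_of_lt hts (hsm.trans hmab.2)⟩, htC⟩
        exact absurd (hmmin t htT) (by linarith)
      exact (inside_const hf (le_of_lt has) hoff).symm
    obtain ⟨⟨si, hsi01, hsiδ, hsiC, hsiIn⟩, ⟨so, hso01, hsoδ, hsoC, hsoIn⟩⟩ :=
      htr m hm01 hmC δ hδpos
    obtain ⟨c, hmc, hcδ, hcC, hgc⟩ : ∃ c, m < c ∧ |c - m| < δ ∧ f c ∉ C ∧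
        (Inside C (f c) ↔ ¬ Inside C (f a)) := by
      by_cases hga : Inside C (f a)
      · refine ⟨so, ?_, hsoδ, hsoC, by tauto⟩
        rcases lt_trichotomy so m with h | h | h
        · exact absurd ((hbelow so hsoδ hsoC h).2 hga) hsoIn
        · rw [h] at hsoC; exact absurd hmC hsoC
        · exact h
      · refine ⟨si, ?_, hsiδ, hsiC, by tauto⟩
        rcases lt_trichotomy si m with h | h | h
        · exact absurd ((hbelow si hsiδ hsiC h).1 hsiIn) hga
        · rw [h] at hsiC; exact absurd hmC hsiC
        · exact h
    have hcb' : c < b' := by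
      have h1 := (abs_lt.1 hcδ).2
      have h2 := min_le_right (m - a) (b' - m)
      simp only [hδdef] at h1; linarith
    have hcb : c < b := lt_of_lt_of_le hcb' hb'le
    have hT2 : {t ∈ Ioo c b | f t ∈ C} = T \ {m} := by
      ext t
      constructor
      · rintro ⟨⟨hct, htb⟩, htC⟩
        have hmt : m < t := hmc.trans hct
        exact ⟨⟨⟨hmab.1.trans hmt, htb⟩, htC⟩, by simpa using hmt.ne'⟩
      · rintro ⟨⟨htab, htC⟩, htm⟩
        have : b' ≤ t := hb'mem t ⟨htab, htC⟩ (by simpa using htm)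
        exact ⟨⟨hcb'.trans_le this, htab.2⟩, htC⟩
    have hT2fin : {t ∈ Ioo c b | f t ∈ C}.Finite := hT2 ▸ (show (T \ {m}).Finite from hfin.diff)
    have hT2card : {t ∈ Ioo c b | f t ∈ C}.ncard = n := by
      rw [hT2, Set.ncard_diff_singleton_of_mem (show m ∈ T from ⟨hmab, hmC⟩), hcard]
      omega
    have hc0 : 0 ≤ c := le_of_lt (lt_of_le_of_lt ha0 (hmab.1.trans hmc))
    have ihc := ih c b hc0 (le_of_lt hcb) hb1 hcC hfb hT2fin hT2card
    rw [Nat.even_add_one, ihc]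
    tauto

/-- a closed polygonal curve `S` with the reachable subgraph in its interior
and the unreachable subgraph in its exterior, avoiding all vertices and crossing edges
transversally, crosses each boundary edge (exactly one reachable endpoint) an odd number
of times, and each accessible edge (both endpoints reachable but the edge not in the
reachable subgraph) an even number of times. -/
theorem stmt_6 {V : Type*} (pos : V → Pt) (E : Set (V × V))
    (reach : V → Prop)
    (Er : Set (V × V)) (hEr : Er ⊆ E)  -- the passable edges (reachable subgraph)
    (hErreach : ∀ e ∈ Er, reach e.1 ∧ reach e.2)
    (S : List Pt) (hS : IsClosedPoly S)
    -- the curve avoids all vertices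
    (havoid : ∀ v : V, pos v ∉ pathSet S)
    -- the interior contains the reachable subgraph
    (hinV : ∀ v : V, reach v → pos v ∈ curveInterior (pathSet S))
    (hinE : ∀ e ∈ Er, segment ℝ (pos e.1) (pos e.2) ⊆ curveInterior (pathSet S))
    -- the exterior contains the unreachable subgraph
    (houtV : ∀ v : V, ¬ reach v → pos v ∈ curveExterior (pathSet S))
    (houtE : ∀ e ∈ E, ¬ reach e.1 → ¬ reach e.2 →
      segment ℝ (pos e.1) (pos e.2) ⊆ curveExterior (pathSet S))
    -- crossings are transversal: near each crossing point the edge has points on both sides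
    (htrans : ∀ e ∈ E, ∀ p ∈ pathSet S ∩ openSegment ℝ (pos e.1) (pos e.2), ∀ ε > (0:ℝ),
      (∃ q ∈ openSegment ℝ (pos e.1) (pos e.2) ∩ Metric.ball p ε,
        q ∈ curveInterior (pathSet S)) ∧
      (∃ q ∈ openSegment ℝ (pos e.1) (pos e.2) ∩ Metric.ball p ε,
        q ∈ curveExterior (pathSet S)))
    -- finitely many crossings on each edge
    (hfin : ∀ e ∈ E, (pathSet S ∩ openSegment ℝ (pos e.1) (pos e.2)).Finite) :
    (∀ e ∈ E, (reach e.1 ↔ ¬ reach e.2) →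
      Odd (pathSet S ∩ openSegment ℝ (pos e.1) (pos e.2)).ncard) ∧
    (∀ e ∈ E, reach e.1 → reach e.2 → e ∉ Er →
      Even (pathSet S ∩ openSegment ℝ (pos e.1) (pos e.2)).ncard) := by
    classical
  set C := pathSet S with hCdef
  have hclass : ∀ v : V, Inside C (pos v) ↔ reach v := by
    intro v
    by_cases h : reach v
    · exact iff_of_true (hinV v h).2 h
    · exact iff_of_false (houtV v h).2 h
  have main : ∀ e ∈ E, pos e.1 ≠ pos e.2 →
      (Even (C ∩ openSegment ℝ (pos e.1) (pos e.2)).ncard ↔ (reach e.1 ↔ reach e.2)) := by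
    intro e he hxy
    set x := pos e.1 with hx
    set y := pos e.2 with hy
    set f : ℝ → Pt := fun t => AffineMap.lineMap x y t with hfdef
    have hfc : Continuous f := AffineMap.lineMap_continuous
    have hinj : Function.Injective f := AffineMap.lineMap_injective ℝ hxy
    have hseg : openSegment ℝ x y = f '' Ioo 0 1 := openSegment_eq_image_lineMap ℝ x y
    have hd : (0:ℝ) < dist x y := dist_pos.2 hxy
    set T := {t ∈ Ioo (0:ℝ) 1 | f t ∈ C} with hTdef
    have hKT : C ∩ openSegment ℝ x y = f '' T := by
      rw [hseg]
      ext p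
      constructor
      · rintro ⟨hpC, t, ht, rfl⟩; exact ⟨t, ⟨ht, hpC⟩, rfl⟩
      · rintro ⟨t, ⟨ht, hpC⟩, rfl⟩; exact ⟨hpC, t, ht, rfl⟩
    have hKfin := hfin e he
    have hTfin : T.Finite := Set.Finite.of_finite_image (by rw [← hKT]; exact hKfin) hinj.injOn
    have hcard : (C ∩ openSegment ℝ x y).ncard = T.ncard := by
      rw [hKT, Set.ncard_image_of_injective _ hinj]
    have htr : ∀ t ∈ Ioo (0:ℝ) 1, f t ∈ C → ∀ δ > (0:ℝ),
        (∃ s ∈ Ioo (0:ℝ) 1, |s - t| < δ ∧ f s ∉ C ∧ Inside C (f s)) ∧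
        (∃ s ∈ Ioo (0:ℝ) 1, |s - t| < δ ∧ f s ∉ C ∧ ¬ Inside C (f s)) := by
      intro t ht htC δ hδ
      have hmem : f t ∈ C ∩ openSegment ℝ x y := ⟨htC, by rw [hseg]; exact ⟨t, ht, rfl⟩⟩
      obtain ⟨⟨q, ⟨hq1, hq2⟩, hq3⟩, ⟨q', ⟨hq1', hq2'⟩, hq3'⟩⟩ :=
        htrans e he (f t) hmem (δ * dist x y) (by positivity)
      constructor
      · rw [hseg] at hq1
        obtain ⟨s, hs, rfl⟩ := hq1
        refine ⟨s, hs, ?_, hq3.1, hq3.2⟩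
        have hdist : dist (f s) (f t) = |s - t| * dist x y := dist_lineMap_lineMap x y s t
        rw [Metric.mem_ball, hdist] at hq2
        exact lt_of_mul_lt_mul_right (by linarith) (le_of_lt hd)
      · rw [hseg] at hq1'
        obtain ⟨s, hs, rfl⟩ := hq1'
        refine ⟨s, hs, ?_, hq3'.1, hq3'.2⟩
        have hdist : dist (f s) (f t) = |s - t| * dist x y := dist_lineMap_lineMap x y s t
        rw [Metric.mem_ball, hdist] at hq2'
        exact lt_of_mul_lt_mul_right (by linarith) (le_of_lt hd)
    have h0 : f 0 = x := by simp [hfdef]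
    have h1 : f 1 = y := by simp [hfdef]
    have hf0 : f 0 ∉ C := by rw [h0, hx]; exact havoid e.1
    have hf1 : f 1 ∉ C := by rw [h1, hy]; exact havoid e.2
    have hkey := key hfc htr T.ncard 0 1 le_rfl zero_le_one le_rfl hf0 hf1 hTfin rfl
    rw [hcard, hkey, h0, h1, hx, hy, hclass, hclass]
  constructor
  · intro e he hre
    have hxy : pos e.1 ≠ pos e.2 := by
      intro h
      have h1 := hclass e.1
      have h2 := hclass e.2
      rw [h] at h1
      tauto
    have := main e he hxy
    rw [Nat.not_even_iff_odd.symm]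
    tauto
  · intro e he h1 h2 _
    by_cases hxy : pos e.1 = pos e.2
    · have hemp : C ∩ openSegment ℝ (pos e.1) (pos e.2) = ∅ := by
        rw [hxy, openSegment_same]
        ext p
        simp only [Set.mem_inter_iff, Set.mem_singleton_iff, Set.mem_empty_iff_false, iff_false,
          not_and]
        rintro hpC rfl
        exact havoid e.2 hpC
      rw [hemp]
      simp
    · have := main e he hxy
      tauto
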